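/- With the setup of the interaction screening loss for an Ising model of ℓ1-width at most γ, the curvature δL*(θ) := L(θ) − L(θ*) − ⟨∇L(θ*), θ − θ*⟩ satisfies δL*(θ) ≥ (e^{-γ}/(2 + 2γ)) · E_μ[(E_u(σ; θ − θ*))²]. -/

import Mathlib

private lemma key_ineq (x : ℝ) : x ^ 2 ≤ (2 + |x|) * (Real.exp (-x) - 1 + x) := by
  rcases le_or_gt 0 x with hx | hx
  · rw [abs_of_nonneg hx]
    set f : ℝ → ℝ := fun t => (2 + t) * (Real.exp (-t) - 1 + t) - t ^ 2 with hf
    have hder : ∀ t : ℝ, HasDerivAt f (1 - (1 + t) * Real.exp (-t)) t := by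
      intro t
      have h1 : HasDerivAt (fun t : ℝ => Real.exp (-t)) (-Real.exp (-t)) t := by
        simpa using (hasDerivAt_neg t).exp
      have h2 : HasDerivAt (fun t : ℝ => Real.exp (-t) - 1 + t)
          (-Real.exp (-t) + 1) t := (h1.sub_const 1).add (hasDerivAt_id t)
      have h3 : HasDerivAt (fun t : ℝ => 2 + t) 1 t := by
        simpa using (hasDerivAt_id t).const_add 2
      have h4 := (h3.mul h2).sub (hasDerivAt_pow 2 t)
      refine h4.congr_deriv ?_
      push_cast
      ring
    have hmono : MonotoneOn f (Set.Ici 0) := by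
      apply monotoneOn_of_deriv_nonneg (convex_Ici 0)
      · exact (Continuous.continuousOn (by
          have : Continuous f := by
            apply Continuous.sub
            · exact (continuous_const.add continuous_id).mul
                (((Real.continuous_exp.comp continuous_neg).sub continuous_const).add
                  continuous_id)
            · exact continuous_pow 2
          exact this))
      · intro t _
        exact (hder t).differentiableAt.differentiableWithinAt
      · intro t ht
        rw [(hder t).deriv]
        have htpos : 0 < t := by simpa using ht
        have h5 : 1 + t ≤ Real.exp t := by
          have := Real.add_one_le_exp t; linarith
        have h6 : Real.exp (-t) * Real.exp t = 1 := by
          rw [← Real.exp_add]; simp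
        have h7 : 0 < Real.exp (-t) := Real.exp_pos _
        nlinarith
    have h0 : f 0 ≤ f x := hmono (by simp) (by simpa using hx) hx
    simp only [hf] at h0
    norm_num at h0
    linarith
  · rw [abs_of_neg hx]
    have h := Real.quadratic_le_exp_of_nonneg (by linarith : (0:ℝ) ≤ -x)
    nlinarith [h, Real.exp_pos (-x)]

open Finset in
/-- Curvature lower bound for the interaction screening loss of an Ising model of
ℓ1-width at most `γ`:
`δL*(θ) ≥ (e^{-γ}/(2 + 2γ)) · E_μ[(E_u(σ; θ − θ*))²]`. -/
theorem curvature_lower_bound (p : ℕ) (u : Fin p) (γ : ℝ) (hγ : 0 < γ)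
    (μ : (Fin p → Bool) → ℝ) (hμ0 : ∀ c, 0 ≤ μ c) (hμ1 : ∑ c, μ c = 1)
    (sp : Bool → ℝ) (hsp : sp = fun b => if b then 1 else -1)
    (Eu : (Fin p → Bool) → (Fin p → ℝ) → ℝ)
    (hEu : Eu = fun c θ => sp (c u) * (θ u + ∑ v ∈ univ.erase u, θ v * sp (c v)))
    (L : (Fin p → ℝ) → ℝ)
    (hL : L = fun θ => ∑ c, μ c * Real.exp (-(Eu c θ)))
    (θstar θ : Fin p → ℝ)
    (hθstar : ∑ i, |θstar i| ≤ γ) (hθ : ∑ i, |θ i| ≤ γ)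
    (G : Fin p → ℝ)
    (hG : ∀ i, HasDerivAt (fun s => L (Function.update θstar i s)) (G i) (θstar i)) :
    L θ - L θstar - ∑ i, G i * (θ i - θstar i) ≥
      (Real.exp (-γ) / (2 + 2 * γ)) *
        ∑ c, μ c * (Eu c (fun i => θ i - θstar i)) ^ 2 := by
  have hsp1 : ∀ b, |sp b| = 1 := by intro b; rw [hsp]; cases b <;> norm_num
  set A : (Fin p → Bool) → Fin p → ℝ :=
    fun c i => if i = u then sp (c u) else sp (c u) * sp (c i) with hA
  have hAabs : ∀ c i, |A c i| = 1 := by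
    intro c i
    simp only [hA]
    split
    · exact hsp1 _
    · rw [abs_mul, hsp1, hsp1]; norm_num
  have hEuA : ∀ c (θ' : Fin p → ℝ), Eu c θ' = ∑ j, A c j * θ' j := by
    intro c θ'
    rw [hEu]
    simp only [hA]
    rw [← Finset.add_sum_erase _ _ (Finset.mem_univ u)]
    rw [if_pos rfl, mul_add, Finset.mul_sum]
    congr 1
    apply Finset.sum_congr rfl
    intro v hv
    rw [if_neg (Finset.ne_of_mem_erase hv)]
    ring
  have hEubound : ∀ c (θ' : Fin p → ℝ), |Eu c θ'| ≤ ∑ i, |θ' i| := by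
    intro c θ'
    rw [hEuA]
    refine (Finset.abs_sum_le_sum_abs _ _).trans ?_
    apply Finset.sum_le_sum
    intro i _
    rw [abs_mul, hAabs]
    norm_num
  set Δ : Fin p → ℝ := fun i => θ i - θstar i with hΔ
  have hlin : ∀ c, Eu c θ = Eu c θstar + Eu c Δ := by
    intro c
    rw [hEuA, hEuA, hEuA, ← Finset.sum_add_distrib]
    apply Finset.sum_congr rfl
    intro j _
    simp only [hΔ]
    ring
  -- derivative computation
  have hupd : ∀ c i (s : ℝ),
      Eu c (Function.update θstar i s) = Eu c θstar + A c i * (s - θstar i) := by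
    intro c i s
    rw [hEuA, hEuA]
    have : ∀ j, Function.update θstar i s j
        = θstar j + (if j = i then s - θstar i else 0) := by
      intro j
      rcases eq_or_ne j i with h | h
      · subst h; simp
      · simp [Function.update_of_ne h, h]
    simp only [this, mul_add, Finset.sum_add_distrib, mul_ite, mul_zero,
      Finset.sum_ite_eq', Finset.mem_univ, if_true]
  have hDeriv : ∀ i, HasDerivAt (fun s => L (Function.update θstar i s))
      (∑ c, μ c * (Real.exp (-(Eu c θstar)) * (-(A c i)))) (θstar i) := by
    intro i
    simp only [hL, hupd]
    apply HasDerivAt.fun_sum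
    intro c _
    have h1 : HasDerivAt (fun s : ℝ => -(Eu c θstar + A c i * (s - θstar i)))
        (-(A c i)) (θstar i) := by
      have := ((((hasDerivAt_id (θstar i)).sub_const (θstar i)).const_mul
        (A c i)).const_add (Eu c θstar)).neg
      simp only [mul_one] at this
      exact this
    have h2 := h1.exp
    simp only [sub_self, mul_zero, add_zero] at h2
    exact h2.const_mul (μ c)
  have hGD : ∀ i, G i = ∑ c, μ c * (Real.exp (-(Eu c θstar)) * (-(A c i))) :=
    fun i => (hG i).unique (hDeriv i)
  -- rewrite the gradient term
  have hgrad : ∑ i, G i * (θ i - θstar i)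
      = ∑ c, μ c * Real.exp (-(Eu c θstar)) * (-(Eu c Δ)) := by
    simp only [hGD, Finset.sum_mul]
    rw [Finset.sum_comm]
    apply Finset.sum_congr rfl
    intro c _
    rw [hEuA c Δ, mul_neg, Finset.mul_sum, ← Finset.sum_neg_distrib]
    apply Finset.sum_congr rfl
    intro i _
    simp only [hΔ]
    ring
  have hLθ : L θ = ∑ c, μ c * (Real.exp (-(Eu c θstar)) * Real.exp (-(Eu c Δ))) := by
    rw [hL]
    apply Finset.sum_congr rfl
    intro c _
    rw [hlin c, neg_add, Real.exp_add]
  have hLs : L θstar = ∑ c, μ c * Real.exp (-(Eu c θstar)) := by rw [hL]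
  rw [hLθ, hLs, hgrad, ge_iff_le, Finset.mul_sum,
    ← Finset.sum_sub_distrib, ← Finset.sum_sub_distrib]
  apply Finset.sum_le_sum
  intro c _
  have hx : |Eu c Δ| ≤ 2 * γ := by
    refine (hEubound c Δ).trans ?_
    have : ∑ i, |Δ i| ≤ ∑ i, (|θ i| + |θstar i|) := by
      apply Finset.sum_le_sum
      intro i _
      simpa [hΔ] using abs_sub (θ i) (θstar i)
    rw [Finset.sum_add_distrib] at this
    linarith
  have hEs : |Eu c θstar| ≤ γ := (hEubound c θstar).trans hθstar
  set x := Eu c Δ with hxdef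
  have hkey := key_ineq x
  have hexps : Real.exp (-γ) ≤ Real.exp (-(Eu c θstar)) := by
    apply Real.exp_le_exp.2
    have := abs_le.1 hEs
    linarith
  have hg0 : 0 ≤ Real.exp (-x) - 1 + x := by
    have := Real.add_one_le_exp (-x)
    linarith
  have habs := abs_nonneg x
  have hgd : x ^ 2 / (2 + 2 * γ) ≤ Real.exp (-x) - 1 + x := by
    rw [div_le_iff₀ (by linarith)]
    have h1 : (2 + |x|) * (Real.exp (-x) - 1 + x)
        ≤ (2 + 2 * γ) * (Real.exp (-x) - 1 + x) := by
      apply mul_le_mul_of_nonneg_right _ hg0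
      linarith [abs_le.1 hx]
    calc x ^ 2 ≤ (2 + |x|) * (Real.exp (-x) - 1 + x) := hkey
      _ ≤ (2 + 2 * γ) * (Real.exp (-x) - 1 + x) := h1
      _ = (Real.exp (-x) - 1 + x) * (2 + 2 * γ) := by ring
  have hμc := hμ0 c
  have hstep : Real.exp (-γ) / (2 + 2 * γ) * x ^ 2
      ≤ Real.exp (-(Eu c θstar)) * (Real.exp (-x) - 1 + x) := by
    have : Real.exp (-γ) / (2 + 2 * γ) * x ^ 2
        = Real.exp (-γ) * (x ^ 2 / (2 + 2 * γ)) := by ring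
    rw [this]
    apply mul_le_mul hexps hgd (by positivity) (Real.exp_pos _).le
  calc Real.exp (-γ) / (2 + 2 * γ) * (μ c * x ^ 2)
      = μ c * (Real.exp (-γ) / (2 + 2 * γ) * x ^ 2) := by ring
    _ ≤ μ c * (Real.exp (-(Eu c θstar)) * (Real.exp (-x) - 1 + x)) :=
        mul_le_mul_of_nonneg_left hstep hμc
    _ = μ c * (Real.exp (-(Eu c θstar)) * Real.exp (-x))
        - μ c * Real.exp (-(Eu c θstar))
        - μ c * Real.exp (-(Eu c θstar)) * -x := by ring
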